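/- arXiv:1710.11561 — 2 statements merged into one kernel-verified Lean document; each statement's English description precedes it below -/
import Mathlib

section
/- Let $E_1$ and $E_2$ be Banach spaces, and let $A_1, A_2 : E_1 \to E_2$ be bounded (continuous) linear operators. Suppose that (i) $A_1$ is injective and the range of $A_1$ is closed in $E_2$, and (ii) $A_2$ is a compact operator. Then the range of $A_1 + A_2$ is closed in $E_2$. -/
open Metric Filter Topology

/-- An injective continuous linear map with closed range between Banach spaces is
bounded below. -/
lemma aux_antilipschitz_of_injective_closed_range
    {E₁ E₂ : Type*} [NormedAddCommGroup E₁] [NormedSpace ℝ E₁] [CompleteSpace E₁]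
    [NormedAddCommGroup E₂] [NormedSpace ℝ E₂] [CompleteSpace E₂]
    (A₁ : E₁ →L[ℝ] E₂) (h_inj : Function.Injective A₁)
    (h_closed : IsClosed (Set.range A₁)) :
    ∃ c : ℝ, 0 < c ∧ ∀ x, ‖x‖ ≤ c * ‖A₁ x‖ := by
  set e := A₁.equivRange h_inj h_closed
  obtain ⟨K, hK⟩ : ∃ K, AntilipschitzWith K ⇑e := ⟨_, e.antilipschitz⟩
  refine ⟨max K 1, lt_of_lt_of_le one_pos (le_max_right _ _), fun x => ?_⟩
  have h1 : ‖x‖ = dist x 0 := by simp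
  have h2 : dist x 0 ≤ K * dist (e x) (e 0) := hK.le_mul_dist x 0
  have h3 : dist (e x) (e 0) = ‖A₁ x‖ := by
    rw [map_zero, dist_zero_right]
    have : ((e x : A₁.range) : E₂) = A₁ x := rfl
    rw [← this]
    rfl
  rw [h1]
  calc dist x 0 ≤ K * dist (e x) (e 0) := h2
    _ = K * ‖A₁ x‖ := by rw [h3]
    _ ≤ max K 1 * ‖A₁ x‖ := by
        gcongr; exact le_max_left _ _

/-- Key estimate: if `A₁` is bounded below and `A₂` is compact, then the distance to the
kernel of `A₁ + A₂` is controlled by the norm of `(A₁ + A₂) x`. -/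
lemma aux_infDist_ker_le
    {E₁ E₂ : Type*} [NormedAddCommGroup E₁] [NormedSpace ℝ E₁] [CompleteSpace E₁]
    [NormedAddCommGroup E₂] [NormedSpace ℝ E₂] [CompleteSpace E₂]
    (A₁ A₂ : E₁ →L[ℝ] E₂)
    (hA : ∃ c : ℝ, 0 < c ∧ ∀ x, ‖x‖ ≤ c * ‖A₁ x‖)
    (h_closed : IsClosed (Set.range A₁))
    (h_cpt : IsCompactOperator A₂) :
    ∃ C : ℝ, 0 < C ∧ ∀ x : E₁,
      infDist x (LinearMap.ker ((A₁ + A₂ : E₁ →L[ℝ] E₂) : E₁ →ₗ[ℝ] E₂) : Set E₁) ≤ C * ‖(A₁ + A₂) x‖ := by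
  set T := A₁ + A₂ with hT
  set N : Set E₁ := (LinearMap.ker (T : E₁ →ₗ[ℝ] E₂) : Set E₁) with hN
  have hNne : N.Nonempty := ⟨0, by simp [hN]⟩
  by_contra h
  push_neg at h
  have hx : ∀ n : ℕ, ∃ x : E₁, (n + 1 : ℝ) * ‖T x‖ < infDist x N := by
    intro n
    obtain ⟨x, hx⟩ := h (n + 1) (by positivity)
    exact ⟨x, hx⟩
  choose x hxlt using hx
  have hd : ∀ n, 0 < infDist (x n) N := fun n =>
    lt_of_le_of_lt (by positivity) (hxlt n)
  have hu : ∀ n : ℕ, ∃ u ∈ N, dist (x n) u < 2 * infDist (x n) N := by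
    intro n
    exact (infDist_lt_iff hNne).mp (by linarith [hd n])
  choose u hu hdu using hu
  set v : ℕ → E₁ := fun n => x n - u n with hv
  have hvd : ∀ n, infDist (x n) N ≤ ‖v n‖ := by
    intro n
    simpa [dist_eq_norm] using infDist_le_dist_of_mem (hu n)
  have hrpos : ∀ n, 0 < ‖v n‖ := fun n => lt_of_lt_of_le (hd n) (hvd n)
  set z : ℕ → E₁ := fun n => ‖v n‖⁻¹ • v n with hz
  have hznorm : ∀ n, ‖z n‖ = 1 := by
    intro n
    simp [hz, norm_smul, inv_mul_cancel₀ (hrpos n).ne']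
  have hTu : ∀ n, T (u n) = 0 := fun n => (LinearMap.mem_ker.mp (hu n))
  have hTz : ∀ n, ‖T (z n)‖ < 1 / (n + 1) := by
    intro n
    have h1 : ‖T (z n)‖ = ‖v n‖⁻¹ * ‖T (v n)‖ := by
      simp [hz, norm_smul, abs_of_pos (inv_pos.mpr (hrpos n))]
    have h2 : T (v n) = T (x n) := by
      simp [hv, map_sub, hTu n]
    have h3 : ‖T (x n)‖ < infDist (x n) N / (n + 1) := by
      rw [lt_div_iff₀ (by positivity)]
      linarith [hxlt n, mul_comm (‖T (x n)‖) ((n : ℝ) + 1)]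
    rw [h1, h2, inv_mul_lt_iff₀ (hrpos n)]
    calc ‖T (x n)‖ < infDist (x n) N / (n + 1) := h3
      _ ≤ ‖v n‖ / (n+1) := by gcongr; exact hvd n
      _ = ‖v n‖ * (1 / (n+1)) := by ring
  have hTz0 : Tendsto (fun n => T (z n)) atTop (nhds 0) := by
    rw [tendsto_zero_iff_norm_tendsto_zero]
    apply squeeze_zero (fun n => norm_nonneg _) (fun n => (hTz n).le)
    exact tendsto_one_div_add_atTop_nhds_zero_nat
  have hzN : ∀ n, ∀ w ∈ N, (1:ℝ)/2 ≤ dist (z n) w := by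
    intro n w hw
    have hmem : u n + ‖v n‖ • w ∈ N := by
      exact Submodule.add_mem _ (hu n) (Submodule.smul_mem _ _ hw)
    have key : infDist (x n) N ≤ dist (x n) (u n + ‖v n‖ • w) :=
      infDist_le_dist_of_mem hmem
    have heq : z n - w = ‖v n‖⁻¹ • (x n - (u n + ‖v n‖ • w)) := by
      rw [smul_sub, smul_add, smul_smul, inv_mul_cancel₀ (hrpos n).ne', one_smul]
      simp only [hz, hv, smul_sub]
      abel
    have hdz : dist (z n) w = ‖v n‖⁻¹ * dist (x n) (u n + ‖v n‖ • w) := by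
      rw [dist_eq_norm, heq, norm_smul, dist_eq_norm]
      simp [abs_of_pos (inv_pos.mpr (hrpos n))]
    rw [hdz, le_inv_mul_iff₀ (hrpos n)]
    have h5 : ‖v n‖ < 2 * infDist (x n) N := by
      have := hdu n; rw [dist_eq_norm] at this; exact this
    nlinarith [hd n, key]
  obtain ⟨K, hK, hKsub⟩ := h_cpt.image_subset_compact_of_bounded
    (f := (A₂ : E₁ →ₗ[ℝ] E₂)) (Metric.isBounded_closedBall (x := (0:E₁)) (r := 1))
  have hmemK : ∀ n, A₂ (z n) ∈ K := by
    intro n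
    apply hKsub
    exact ⟨z n, by simp [hznorm n], rfl⟩
  obtain ⟨w, -, φ, hφ, hw⟩ := hK.tendsto_subseq hmemK
  have hA1 : Tendsto (fun n => A₁ (z (φ n))) atTop (nhds (-w)) := by
    have heq : ∀ n, A₁ (z (φ n)) = T (z (φ n)) - A₂ (z (φ n)) := by
      intro n; simp [hT]
    simp_rw [heq]
    have := (hTz0.comp hφ.tendsto_atTop).sub hw
    simpa using this
  obtain ⟨c, hc, hA⟩ := hA
  have hwrange : -w ∈ Set.range A₁ :=
    h_closed.mem_of_tendsto hA1 (Eventually.of_forall fun n => ⟨_, rfl⟩)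
  obtain ⟨p, hp⟩ := hwrange
  have hzp : Tendsto (fun n => z (φ n)) atTop (nhds p) := by
    rw [tendsto_iff_norm_sub_tendsto_zero]
    apply squeeze_zero (fun n => norm_nonneg _)
      (fun n => by simpa [map_sub] using hA (z (φ n) - p))
    have h6 : Tendsto (fun n => A₁ (z (φ n)) - A₁ p) atTop (nhds 0) := by
      simpa [hp] using hA1.sub_const (-w)
    simpa [mul_comm] using (h6.norm.const_mul c)
  have hTp : T p = 0 := by
    refine tendsto_nhds_unique ((T.continuous.tendsto p).comp hzp) ?_
    exact hTz0.comp hφ.tendsto_atTop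
  have hpN : p ∈ N := LinearMap.mem_ker.mpr hTp
  have h0 : Tendsto (fun n => dist (z (φ n)) p) atTop (nhds 0) :=
    tendsto_iff_dist_tendsto_zero.mp hzp
  have : (1:ℝ)/2 ≤ 0 :=
    ge_of_tendsto h0 (Eventually.of_forall fun n => hzN _ p hpN)
  linarith

/-- A continuous linear map whose kernel-distance is controlled by the norm of the image
has closed range (lift to the quotient by the kernel, where it is antilipschitz). -/
lemma aux_closed_range_of_infDist_ker_le
    {E₁ E₂ : Type*} [NormedAddCommGroup E₁] [NormedSpace ℝ E₁] [CompleteSpace E₁]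
    [NormedAddCommGroup E₂] [NormedSpace ℝ E₂] [CompleteSpace E₂]
    (T : E₁ →L[ℝ] E₂)
    (hC : ∃ C : ℝ, 0 < C ∧ ∀ x : E₁,
      infDist x (LinearMap.ker (T : E₁ →ₗ[ℝ] E₂) : Set E₁) ≤ C * ‖T x‖) :
    IsClosed (Set.range T) := by
  obtain ⟨C, hCpos, hC⟩ := hC
  set N : Submodule ℝ E₁ := LinearMap.ker (T : E₁ →ₗ[ℝ] E₂) with hN
  set f : (E₁ ⧸ N) →ₗ[ℝ] E₂ := N.liftQ (T : E₁ →ₗ[ℝ] E₂) (le_refl _) with hf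
  have hfmk : ∀ x : E₁, f (Submodule.Quotient.mk x) = T x := fun x => rfl
  have hnorm_mk : ∀ x : E₁, ‖(Submodule.Quotient.mk x : E₁ ⧸ N)‖ = infDist x (N : Set E₁) := by
    intro x
    exact QuotientAddGroup.norm_mk (S := N.toAddSubgroup) x
  have hanti : AntilipschitzWith (⟨C, hCpos.le⟩ : NNReal) f := by
    refine AntilipschitzWith.of_le_mul_dist fun q₁ q₂ => ?_
    obtain ⟨x₁, rfl⟩ := Submodule.Quotient.mk_surjective N q₁
    obtain ⟨x₂, rfl⟩ := Submodule.Quotient.mk_surjective N q₂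
    rw [dist_eq_norm, dist_eq_norm, ← map_sub, ← Submodule.Quotient.mk_sub,
      hnorm_mk, hfmk]
    have h' := hC (x₁ - x₂)
    exact h'
  have hlip : LipschitzWith ‖T‖₊ f := by
    refine LipschitzWith.of_dist_le_mul fun q₁ q₂ => ?_
    obtain ⟨x₁, rfl⟩ := Submodule.Quotient.mk_surjective N q₁
    obtain ⟨x₂, rfl⟩ := Submodule.Quotient.mk_surjective N q₂
    rw [dist_eq_norm, dist_eq_norm, ← map_sub, ← Submodule.Quotient.mk_sub]
    set q := (Submodule.Quotient.mk (x₁ - x₂) : E₁ ⧸ N)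
    refine le_of_forall_pos_le_add fun ε hε => ?_
    obtain ⟨m, hm, hmlt⟩ := Submodule.Quotient.norm_mk_lt q
      (div_pos hε (by positivity : (0:ℝ) < ‖T‖ + 1))
    calc ‖f q‖ = ‖T m‖ := by rw [← hm, hfmk]
      _ ≤ ‖T‖ * ‖m‖ := T.le_opNorm m
      _ ≤ ‖T‖ * (‖q‖ + ε / (‖T‖ + 1)) := by have := hmlt.le; gcongr
      _ = ‖T‖ * ‖q‖ + ‖T‖ * (ε / (‖T‖ + 1)) := by ring
      _ ≤ ‖T‖ * ‖q‖ + ε := by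
          have h1 : ‖T‖ * (ε / (‖T‖ + 1)) ≤ ε := by
            rw [mul_div_assoc', div_le_iff₀ (by positivity : (0:ℝ) < ‖T‖ + 1)]
            nlinarith [norm_nonneg T]
          linarith
      _ = ↑‖T‖₊ * ‖q‖ + ε := by rw [coe_nnnorm]
  have hclosed : IsClosed (Set.range f) :=
    hanti.isClosed_range hlip.uniformContinuous
  have hrange : Set.range (T : E₁ → E₂) = Set.range f := by
    ext y
    constructor
    · rintro ⟨x, rfl⟩; exact ⟨Submodule.Quotient.mk x, rfl⟩
    · rintro ⟨q, rfl⟩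
      obtain ⟨x, rfl⟩ := Submodule.Quotient.mk_surjective N q
      exact ⟨x, rfl⟩
  rw [hrange]
  exact hclosed

/-- If `A₁ : E₁ → E₂` is a bounded linear operator between Banach spaces which is
injective with closed range, and `A₂ : E₁ → E₂` is a compact bounded linear operator,
then the range of `A₁ + A₂` is closed in `E₂`. -/
theorem closed_range_of_injective_closed_range_add_compact
    {E₁ E₂ : Type*} [NormedAddCommGroup E₁] [NormedSpace ℝ E₁] [CompleteSpace E₁]
    [NormedAddCommGroup E₂] [NormedSpace ℝ E₂] [CompleteSpace E₂]
    (A₁ A₂ : E₁ →L[ℝ] E₂)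
    (h_inj : Function.Injective A₁)
    (h_closed : IsClosed (Set.range A₁))
    (h_cpt : IsCompactOperator A₂) :
    IsClosed (Set.range (A₁ + A₂)) := by
  have hA := aux_antilipschitz_of_injective_closed_range A₁ h_inj h_closed
  have hC := aux_infDist_ker_le A₁ A₂ hA h_closed h_cpt
  exact aux_closed_range_of_infDist_ker_le (A₁ + A₂) hC
end

section
/- Let $g \geq 0$ and $n \geq 1$ be natural numbers, and let $m_1 \geq m_2 \geq \cdots \geq m_n \geq 2$ be natural numbers satisfying $2 - 2g = \sum_{i=1}^n \left(1 - \frac{1}{m_i}\right)$ as rational numbers. Then $g = 0$ and the tuple $(m_1, \ldots, m_n)$ is one of exactly four possibilities: $(2,2,2,2)$ (with $n = 4$), or $(4,4,2)$, $(6,3,2)$, $(3,3,3)$ (with $n = 3$). -/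
lemma key3 (a b c : ℕ) (hab : b ≤ a) (hbc : c ≤ b) (hc : 2 ≤ c)
    (h : b*c + a*c + a*b = a*b*c) :
    (a=4∧b=4∧c=2) ∨ (a=6∧b=3∧c=2) ∨ (a=3∧b=3∧c=3) := by
  have ha0 : 0 < a := by omega
  have hb0 : 0 < b := by omega
  have h1 : b*c ≤ a*b := Nat.mul_le_mul hab hbc
  have h2 : a*c ≤ a*b := Nat.mul_le_mul le_rfl hbc
  have h0 : 0 < a*b := Nat.mul_pos ha0 hb0
  have hc3 : c ≤ 3 := by
    by_contra hc4
    push_neg at hc4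
    have h4 : a*b*4 ≤ a*b*c := Nat.mul_le_mul le_rfl (by omega)
    omega
  interval_cases c
  · have hb4 : b ≤ 4 := by
      by_contra hb5
      push_neg at hb5
      have h5 : a*5 ≤ a*b := Nat.mul_le_mul le_rfl (by omega)
      omega
    interval_cases b <;> omega
  · have hb3 : b ≤ 3 := by
      by_contra hb4
      push_neg at hb4
      have h5 : a*4 ≤ a*b := Nat.mul_le_mul le_rfl (by omega)
      omega
    interval_cases b <;> omega



/-- Classification of elliptic orbifold signatures: if `g ≥ 0`, `n ≥ 1`,
`m : Fin n → ℕ` is nonincreasing with `m i ≥ 2` for all `i`, and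
`2 - 2g = ∑ i, (1 - 1/(m i))` as rationals, then `g = 0` and the tuple
`(m 1, …, m n)` is `(2,2,2,2)`, `(4,4,2)`, `(6,3,2)`, or `(3,3,3)`. -/
theorem elliptic_orbifold_signature_classification
    (g n : ℕ) (hn : 1 ≤ n) (m : Fin n → ℕ)
    (hmono : ∀ i j : Fin n, i ≤ j → m j ≤ m i)
    (hm : ∀ i, 2 ≤ m i)
    (h : (2 : ℚ) - 2 * g = ∑ i, (1 - 1 / (m i : ℚ))) :
    g = 0 ∧
      (List.ofFn m = [2, 2, 2, 2] ∨ List.ofFn m = [4, 4, 2] ∨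
        List.ofFn m = [6, 3, 2] ∨ List.ofFn m = [3, 3, 3]) := by
  have hpos : ∀ i, (0:ℚ) < m i := fun i => by
    have h1 := hm i
    exact_mod_cast (by omega : 0 < m i)
  have h2i : ∀ i, (2:ℚ) ≤ m i := fun i => by exact_mod_cast hm i
  have hlo : ∀ i, (1/2:ℚ) ≤ 1 - 1/(m i) := fun i => by
    have h1 : 1/(m i:ℚ) ≤ 1/2 := by
      rw [div_le_div_iff₀ (hpos i) (by norm_num)]
      linarith [h2i i]
    linarith
  have hhi : ∀ i, (1:ℚ) - 1/(m i) < 1 := fun i => by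
    have : (0:ℚ) < 1/(m i) := one_div_pos.mpr (hpos i)
    linarith
  have hsum_lo : (n:ℚ) * (1/2) ≤ ∑ i, (1 - 1/(m i:ℚ)) := by
    have := Finset.card_nsmul_le_sum Finset.univ (fun i => 1 - 1/(m i:ℚ)) (1/2)
      (fun i _ => hlo i)
    simpa [nsmul_eq_mul] using this
  have hsum_hi : ∑ i, (1 - 1/(m i:ℚ)) < n := by
    have := Finset.sum_lt_sum_of_nonempty (s := Finset.univ)
      (f := fun i => 1 - 1/(m i:ℚ)) (g := fun _ => (1:ℚ))
      (Finset.univ_nonempty_iff.2 ⟨⟨0, hn⟩⟩) (fun i _ => hhi i)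
    simpa using this
  have hg : g = 0 := by
    have h1 : (0:ℚ) < 2 - 2*g := by
      have : (1:ℚ) ≤ n := by exact_mod_cast hn
      nlinarith
    have : (g:ℚ) < 1 := by linarith
    exact_mod_cast Nat.lt_one_iff.mp (by exact_mod_cast this)
  subst hg
  refine ⟨rfl, ?_⟩
  push_cast at h
  have h2 : (2:ℚ) = ∑ i, (1 - 1/(m i:ℚ)) := by linarith
  have hn4 : n ≤ 4 := by
    by_contra hn5
    push_neg at hn5
    have : (5:ℚ) ≤ n := by exact_mod_cast hn5
    linarith
  have hn3 : 3 ≤ n := by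
    by_contra hn2
    push_neg at hn2
    have : (n:ℚ) ≤ 2 := by exact_mod_cast Nat.lt_succ_iff.mp hn2
    linarith
  have hlist3 : ∀ (f : Fin 3 → ℕ), List.ofFn f = [f 0, f 1, f 2] := fun f => by
    simp [List.ofFn_succ]
  have hlist4 : ∀ (f : Fin 4 → ℕ), List.ofFn f = [f 0, f 1, f 2, f 3] := fun f => by
    simp [List.ofFn_succ]
  rcases (by omega : n = 3 ∨ n = 4) with rfl | rfl
  · -- n = 3
    rw [Fin.sum_univ_three] at h2
    have ha' : (m 0:ℚ) ≠ 0 := ne_of_gt (hpos 0)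
    have hb' : (m 1:ℚ) ≠ 0 := ne_of_gt (hpos 1)
    have hc' : (m 2:ℚ) ≠ 0 := ne_of_gt (hpos 2)
    have h1 : (1:ℚ)/(m 0) + 1/(m 1) + 1/(m 2) = 1 := by linarith
    field_simp at h1
    have hNe : (m 1 + m 0) * m 2 + m 0 * m 1 = m 0 * m 1 * m 2 := by exact_mod_cast h1
    have hN : m 1 * m 2 + m 0 * m 2 + m 0 * m 1 = m 0 * m 1 * m 2 := by
      rw [show m 1 * m 2 + m 0 * m 2 + m 0 * m 1 = (m 1 + m 0) * m 2 + m 0 * m 1 from by ring]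
      exact hNe
    have := key3 (m 0) (m 1) (m 2) (hmono 0 1 (by decide)) (hmono 1 2 (by decide))
      (hm 2) hN
    rw [hlist3 m]
    rcases this with ⟨e1,e2,e3⟩|⟨e1,e2,e3⟩|⟨e1,e2,e3⟩ <;> simp [e1,e2,e3]
  · -- n = 4
    rw [Fin.sum_univ_four] at h2
    have hle : ∀ j : Fin 4, 1/(m j:ℚ) ≤ 1/2 := fun j => by
      rw [div_le_div_iff₀ (hpos j) (by norm_num)]
      linarith [h2i j]
    have hv : ∀ j : Fin 4, 1/(m j:ℚ) = 1/2 → m j = 2 := fun j hj => by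
      rw [div_eq_div_iff (ne_of_gt (hpos j)) (by norm_num : (2:ℚ) ≠ 0)] at hj
      exact_mod_cast (by linarith : (m j:ℚ) = 2)
    have e0 := hv 0 (by linarith [hle 0, hle 1, hle 2, hle 3])
    have e1 := hv 1 (by linarith [hle 0, hle 1, hle 2, hle 3])
    have e2 := hv 2 (by linarith [hle 0, hle 1, hle 2, hle 3])
    have e3 := hv 3 (by linarith [hle 0, hle 1, hle 2, hle 3])
    rw [hlist4 m]
    simp [e0, e1, e2, e3]
end
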